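/- Let g: {0,1}^k → {0,1} (with k a perfect square) be the function that equals 1 if and only if the input consists of exactly √k consecutive ones and zeroes elsewhere. Then the 1-certificate complexity of g equals k. -/

import Mathlib

open Finset

section Core
variable {ι : Type} [Fintype ι] [DecidableEq ι]

/-- Flip the bits of `x` indexed by the block `B`. -/
def flipSet (x : ι → Bool) (B : Finset ι) : ι → Bool :=
  fun i => if i ∈ B then !(x i) else x i

/-- Sensitivity of `f` at input `x`. -/
def sensAt (f : (ι → Bool) → Bool) (x : ι → Bool) : ℕ :=
  (univ.filter fun i => f (flipSet x {i}) ≠ f x).card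

/-- Sensitivity of `f`. -/
def sens (f : (ι → Bool) → Bool) : ℕ :=
  univ.sup fun x => sensAt f x

/-- Block sensitivity of `f` at `x`: the maximal number of pairwise disjoint
sensitive blocks at `x`. -/
noncomputable def bsAt (f : (ι → Bool) → Bool) (x : ι → Bool) : ℕ :=
  sSup {r | ∃ B : Fin r → Finset ι,
    (∀ j, f (flipSet x (B j)) ≠ f x) ∧
    ∀ j₁ j₂, j₁ ≠ j₂ → Disjoint (B j₁) (B j₂)}

/-- Block sensitivity of `f`. -/
noncomputable def blockSens (f : (ι → Bool) → Bool) : ℕ :=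
  univ.sup fun x => bsAt f x

/-- `S` is a certificate for `f` at `x`: every input agreeing with `x` on `S`
 has the same `f`-value as `x`. -/
def IsCert (f : (ι → Bool) → Bool) (x : ι → Bool) (S : Finset ι) : Prop :=
  ∀ y : ι → Bool, (∀ i ∈ S, y i = x i) → f y = f x

/-- Certificate complexity of `f` at `x`. -/
noncomputable def certAt (f : (ι → Bool) → Bool) (x : ι → Bool) : ℕ :=
  sInf {c | ∃ S : Finset ι, S.card = c ∧ IsCert f x S}

/-- Certificate complexity of `f`. -/
noncomputable def certC (f : (ι → Bool) → Bool) : ℕ :=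
  univ.sup fun x => certAt f x

/-- 0-certificate complexity of `f`. -/
noncomputable def cert0 (f : (ι → Bool) → Bool) : ℕ :=
  (univ.filter fun x => f x = false).sup fun x => certAt f x

/-- 1-certificate complexity of `f`. -/
noncomputable def cert1 (f : (ι → Bool) → Bool) : ℕ :=
  (univ.filter fun x => f x = true).sup fun x => certAt f x

/-- The restriction of `f` by the partial assignment `ρ` (a variable `i` with
`ρ i = none` is left unset; otherwise it is fixed to the given value). The
restricted function depends only on the unset variables. -/
def restrictBF (f : (ι → Bool) → Bool) (ρ : ι → Option Bool) : (ι → Bool) → Bool :=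
  fun x => f fun i => (ρ i).getD (x i)

/-- Number of unset variables of a partial assignment. -/
def unsetCard (ρ : ι → Option Bool) : ℕ :=
  (univ.filter fun i => ρ i = none).card

end Core

/-- The function on `{0,1}^{m²}` that is `1` iff the input consists of exactly
`m = √(m²)` consecutive ones and zeroes elsewhere. -/
def consecOnes (m : ℕ) : (Fin (m ^ 2) → Bool) → Bool :=
  fun y => decide (∃ s : Fin (m ^ 2 + 1), (s : ℕ) + m ≤ m ^ 2 ∧
    ∀ j : Fin (m ^ 2), (y j = true ↔ (s : ℕ) ≤ (j : ℕ) ∧ (j : ℕ) < (s : ℕ) + m))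


lemma isCert_univ {ι : Type} [Fintype ι] [DecidableEq ι]
    (f : (ι → Bool) → Bool) (x : ι → Bool) : IsCert f x univ := by
  intro y h
  have : y = x := funext fun i => h i (mem_univ i)
  rw [this]

lemma certAt_le_card {ι : Type} [Fintype ι] [DecidableEq ι]
    (f : (ι → Bool) → Bool) (x : ι → Bool) : certAt f x ≤ Fintype.card ι :=
  Nat.sInf_le ⟨univ, by simp, isCert_univ f x⟩

lemma f_x0 (m : ℕ) : consecOnes m (fun j => decide ((j : ℕ) < m)) = true := by
  rw [consecOnes, decide_eq_true_eq]
  refine ⟨⟨0, by omega⟩, ?_, fun j => ?_⟩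
  · simpa using Nat.le_self_pow two_ne_zero m
  · simp only [decide_eq_true_eq, Fin.val_mk]
    omega

lemma cert_eq_univ (m : ℕ) (hm : 1 ≤ m) (S : Finset (Fin (m ^ 2)))
    (hS : IsCert (consecOnes m) (fun j => decide ((j : ℕ) < m)) S) : S = univ := by
  by_contra h
  obtain ⟨i, hi⟩ : ∃ i, i ∉ S := by
    by_contra h'; push_neg at h'; exact h (eq_univ_of_forall h')
  set y : Fin (m ^ 2) → Bool :=
    fun j => if j = i then !(decide ((j : ℕ) < m)) else decide ((j : ℕ) < m) with hy
  have hagree : ∀ j ∈ S, y j = decide ((j : ℕ) < m) := by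
    intro j hj
    have : j ≠ i := fun e => hi (e ▸ hj)
    simp [hy, this]
  have hfy : consecOnes m y = true := (hS y hagree).trans (f_x0 m)
  rw [consecOnes, decide_eq_true_eq] at hfy
  obtain ⟨s, hs, hP⟩ := hfy
  have hk : 1 ≤ m ^ 2 := by nlinarith
  by_cases him : (i : ℕ) < m
  · rcases Nat.lt_or_ge m 2 with hm2 | hm2
    · -- m = 1
      have hm1 : m = 1 := by omega
      have h1 := hP i
      simp only [hy, if_pos rfl, decide_eq_true_eq] at h1
      have : ¬ ((i : ℕ) < m) → False := fun hc => hc him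
      simp only [him, decide_true, Bool.not_true, Bool.false_eq_true, false_iff] at h1
      have : (s : ℕ) + m ≤ m ^ 2 := hs
      have hi2 : (i : ℕ) < m ^ 2 := i.isLt
      have hpow : m ^ 2 = 1 := by rw [hm1]; norm_num
      omega
    · -- m ≥ 2
      by_cases hi0 : (i : ℕ) = 0
      · have h1 := hP ⟨1, by nlinarith⟩
        have hne1 : (⟨1, by nlinarith⟩ : Fin (m ^ 2)) ≠ i := by
          intro e; have := congrArg Fin.val e; simp at this; omega
        simp only [hy, if_neg hne1, decide_eq_true_eq, Fin.val_mk] at h1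
        have h1' := h1.mp (by omega)
        have h0 := hP i
        simp only [hy, if_pos rfl, him, decide_true, Bool.not_true,
          Bool.false_eq_true, false_iff] at h0
        have hmj := hP ⟨m, by nlinarith⟩
        have hnem : (⟨m, by nlinarith⟩ : Fin (m ^ 2)) ≠ i := by
          intro e; have := congrArg Fin.val e; simp at this; omega
        simp only [hy, if_neg hnem, decide_eq_true_eq, Fin.val_mk] at hmj
        have hmj' := hmj.not
        omega
      · have h0 := hP ⟨0, by omega⟩
        have hne0 : (⟨0, by omega⟩ : Fin (m ^ 2)) ≠ i := by
          intro e; have := congrArg Fin.val e; simp at this; omega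
        simp only [hy, if_neg hne0, decide_eq_true_eq, Fin.val_mk] at h0
        have h0' := h0.mp (by omega)
        have h1 := hP i
        simp only [hy, if_pos rfl, him, decide_true, Bool.not_true,
          Bool.false_eq_true, false_iff] at h1
        omega
  · have h1 := hP i
    simp only [hy, if_pos rfl, him, decide_false, Bool.not_false, true_iff] at h1
    have h0 := hP ⟨0, by omega⟩
    have hne0 : (⟨0, by omega⟩ : Fin (m ^ 2)) ≠ i := by
      intro e; have := congrArg Fin.val e; simp at this; omega
    simp only [hy, if_neg hne0, decide_eq_true_eq, Fin.val_mk] at h0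
    have h0' := h0.mp (by omega)
    omega

lemma certAt_x0 (m : ℕ) (hm : 1 ≤ m) :
    certAt (consecOnes m) (fun j => decide ((j : ℕ) < m)) = m ^ 2 := by
  have hle : certAt (consecOnes m) (fun j => decide ((j : ℕ) < m)) ≤ m ^ 2 := by
    simpa using certAt_le_card (consecOnes m) (fun j => decide ((j : ℕ) < m))
  refine le_antisymm hle ?_
  have hne : {c | ∃ S : Finset (Fin (m ^ 2)), S.card = c ∧
      IsCert (consecOnes m) (fun j => decide ((j : ℕ) < m)) S}.Nonempty :=
    ⟨m ^ 2, univ, by simp, isCert_univ _ _⟩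
  obtain ⟨S, hcard, hcert⟩ := Nat.sInf_mem hne
  rw [certAt, ← hcard, cert_eq_univ m hm S hcert]
  simp

/-- the 1-certificate complexity of `consecOnes` on `k = m²`
variables equals `k`. -/
theorem cert1_consecOnes (m : ℕ) :
    cert1 (consecOnes m) = m ^ 2 := by
  refine le_antisymm ?_ ?_
  · refine Finset.sup_le fun x _ => ?_
    simpa using certAt_le_card (consecOnes m) x
  · rcases Nat.eq_zero_or_pos m with rfl | hm
    · simp
    · calc m ^ 2 = certAt (consecOnes m) (fun j => decide ((j : ℕ) < m)) :=
            (certAt_x0 m hm).symm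
        _ ≤ cert1 (consecOnes m) :=
            Finset.le_sup (mem_filter.mpr ⟨mem_univ _, f_x0 m⟩)
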